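/- Let φ : C' ⥤ C be an equivalence of small categories and let D : FC ⥤ Ab be a natural system on C. Then for every n ≥ 0 the induced map is an isomorphism (R^n lim_{FC})(D) ≅ (R^n lim_{FC'})(D ∘ Fφ) between the n-th right derived limit of D over FC and the n-th right derived limit of the pullback natural system φ*D = D ∘ Fφ over FC'. (Equivalently: equivalences of small categories induce isomorphisms in Baues-Wirsching cohomology.) -/

import Mathlib

/-!
STATEMENT 9: If `φ : C' ⥤ C` is an equivalence of small categories and `D : FC ⥤ Ab` is a
natural system on `C`, then for every `n ≥ 0` there is an isomorphism
`(R^n lim_{FC})(D) ≅ (R^n lim_{FC'})(D ∘ Fφ)`; i.e. equivalences of small categories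
induce isomorphisms in Baues-Wirsching cohomology `H^n_BW(C, D) ≅ H^n_BW(C', φ*D)`.
-/

open CategoryTheory CategoryTheory.Limits CategoryTheory.Functor

universe u

/-- Objects of the factorization category `FC`: the morphisms of `C`. -/
structure FCObj (C : Type u) [SmallCategory C] : Type u where
  src : C
  tgt : C
  hom : src ⟶ tgt

namespace FCObj

variable {C : Type u} [SmallCategory C]

/-- Morphisms `(α, β) : f ⟶ f'` in the factorization category, where `α : a' ⟶ a`,
`β : b ⟶ b'` and `f' = β ∘ f ∘ α`. -/
structure Hom (f g : FCObj C) : Type u where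
  alpha : g.src ⟶ f.src
  beta : f.tgt ⟶ g.tgt
  w : g.hom = alpha ≫ f.hom ≫ beta

theorem Hom.ext' {f g : FCObj C} {p q : Hom f g}
    (h1 : p.alpha = q.alpha) (h2 : p.beta = q.beta) : p = q := by
  cases p; cases q; cases h1; cases h2; rfl

/-- The factorization category of `C`, with composition `(α', β') ∘ (α, β) = (α ≫ α', β' ≫ β)`. -/
instance category : Category (FCObj C) where
  Hom f g := Hom f g
  id f := ⟨𝟙 _, 𝟙 _, by simp⟩
  comp p q := ⟨q.alpha ≫ p.alpha, p.beta ≫ q.beta, by rw [q.w, p.w]; simp⟩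
  id_comp p := Hom.ext' (by simp) (by simp)
  comp_id p := Hom.ext' (by simp) (by simp)
  assoc p q r := Hom.ext' (by simp) (by simp)

@[simp] theorem id_alpha (f : FCObj C) : Hom.alpha (𝟙 f) = 𝟙 f.src := rfl
@[simp] theorem id_beta (f : FCObj C) : Hom.beta (𝟙 f) = 𝟙 f.tgt := rfl
@[simp] theorem comp_alpha {f g h : FCObj C} (p : f ⟶ g) (q : g ⟶ h) :
    Hom.alpha (p ≫ q) = q.alpha ≫ p.alpha := rfl
@[simp] theorem comp_beta {f g h : FCObj C} (p : f ⟶ g) (q : g ⟶ h) :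
    Hom.beta (p ≫ q) = p.beta ≫ q.beta := rfl

/-- The functor `Fφ : FC' ⥤ FC` induced on factorization categories by `φ : C' ⥤ C`,
given by `f ↦ φ(f)` and `(α, β) ↦ (φ(α), φ(β))`. -/
def map {C' : Type u} [SmallCategory C'] (φ : C' ⥤ C) : FCObj C' ⥤ FCObj C where
  obj f := ⟨φ.obj f.src, φ.obj f.tgt, φ.map f.hom⟩
  map p := ⟨φ.map p.alpha, φ.map p.beta, by simp [p.w]⟩
  map_id _ := Hom.ext' (by simp) (by simp)
  map_comp _ _ := Hom.ext' (by simp) (by simp)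

end FCObj

noncomputable instance limAdditive {J : Type u} [SmallCategory J] :
    (lim : (J ⥤ AddCommGrpCat.{u}) ⥤ AddCommGrpCat.{u}).Additive :=
  Functor.additive_of_preserves_binary_products _


namespace FCObj

variable {C' C : Type u} [SmallCategory C'] [SmallCategory C]

/-- Build an isomorphism in `FCObj C` from isomorphisms on sources and targets. -/
def isoMk {f g : FCObj C} (i1 : f.src ≅ g.src) (i2 : f.tgt ≅ g.tgt)
    (w : g.hom = i1.inv ≫ f.hom ≫ i2.hom) : f ≅ g where
  hom := ⟨i1.inv, i2.hom, w⟩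
  inv := ⟨i1.hom, i2.inv, by rw [w]; simp⟩
  hom_inv_id := Hom.ext' (by simp) (by simp)
  inv_hom_id := Hom.ext' (by simp) (by simp)

instance map_faithful (φ : C' ⥤ C) [φ.Faithful] : (map φ).Faithful where
  map_injective {f g} p q h :=
    Hom.ext' (φ.map_injective (congrArg Hom.alpha h)) (φ.map_injective (congrArg Hom.beta h))

instance map_full (φ : C' ⥤ C) [φ.Full] [φ.Faithful] : (map φ).Full where
  map_surjective {f g} q :=
    ⟨⟨φ.preimage q.alpha, φ.preimage q.beta,
      φ.map_injective (by simpa [map] using q.w)⟩,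
      Hom.ext' (by simp [map]) (by simp [map])⟩

instance map_essSurj (φ : C' ⥤ C) [φ.IsEquivalence] : (map φ).EssSurj where
  mem_essImage g :=
    ⟨⟨φ.objPreimage g.src, φ.objPreimage g.tgt,
      φ.preimage ((φ.objObjPreimageIso g.src).hom ≫ g.hom ≫ (φ.objObjPreimageIso g.tgt).inv)⟩,
      ⟨isoMk (φ.objObjPreimageIso g.src) (φ.objObjPreimageIso g.tgt) (by simp [map])⟩⟩

instance map_isEquivalence (φ : C' ⥤ C) [φ.IsEquivalence] : (map φ).IsEquivalence where

end FCObj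

instance whiskeringLeftObjAdditive {C D : Type*} [Category C] [Category D]
    {E : Type*} [Category E] [Preadditive E] (F : C ⥤ D) :
    ((whiskeringLeft C D E).obj F).Additive where
  map_add := by intros; ext; simp

/-- Derived functors of a composition with an exact equivalence. -/
noncomputable def rightDerivedCompIsoAux {A : Type*} {B : Type*} {T : Type*}
    [Category A] [Category B] [Category T]
    [Abelian A] [Abelian B] [Abelian T] [EnoughInjectives A] [EnoughInjectives B]
    (E : A ⥤ B) [E.IsEquivalence] [E.Additive] (G : B ⥤ T) [G.Additive] (X : A) (n : ℕ) :
    ((E ⋙ G).rightDerived n).obj X ≅ (G.rightDerived n).obj (E.obj X) := by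
  haveI : PreservesFiniteLimits E := inferInstance
  haveI : PreservesFiniteColimits E := inferInstance
  let I : InjectiveResolution X := InjectiveResolution.of X
  let J : InjectiveResolution (E.obj X) :=
    { cocomplex := (E.mapHomologicalComplex _).obj I.cocomplex
      injective := fun m => (E.asEquivalence.map_injective_iff _).2 (I.injective m)
      ι := (HomologicalComplex.singleMapHomologicalComplex E _ 0).inv.app X ≫
        (E.mapHomologicalComplex _).map I.ι
      quasiIso := inferInstance }
  refine I.isoRightDerivedObj (E ⋙ G) n ≪≫ ?_ ≪≫ (J.isoRightDerivedObj G n).symm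
  exact (HomologicalComplex.homologyFunctor T _ n).mapIso
    (HomologicalComplex.Hom.isoOfComponents (fun i => Iso.refl _) (by
      simp; intro i; exact (Category.id_comp _).trans (Category.comp_id _).symm))

theorem bauesWirsching_cohomology_invariance {C' C : Type u} [SmallCategory C'] [SmallCategory C]
    (φ : C' ⥤ C) (h : φ.IsEquivalence) (D : FCObj C ⥤ AddCommGrpCat.{u}) (n : ℕ)
    [EnoughInjectives (FCObj C ⥤ AddCommGrpCat.{u})]
    [EnoughInjectives (FCObj C' ⥤ AddCommGrpCat.{u})] :
    Nonempty
      ((((lim : (FCObj C ⥤ AddCommGrpCat.{u}) ⥤ AddCommGrpCat.{u}).rightDerived n).obj D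
          : AddCommGrpCat.{u}) ≅
        ((lim : (FCObj C' ⥤ AddCommGrpCat.{u}) ⥤ AddCommGrpCat.{u}).rightDerived n).obj
          (FCObj.map φ ⋙ D)) := by
  haveI := h
  haveI : (FCObj.map φ).Initial := inferInstance
  let res : (FCObj C ⥤ AddCommGrpCat.{u}) ⥤ (FCObj C' ⥤ AddCommGrpCat.{u}) :=
    (whiskeringLeft _ _ _).obj (FCObj.map φ)
  let η : res ⋙ lim ≅ lim := Functor.Initial.limIso (FCObj.map φ)
  let rd1 : (res ⋙ (lim : (FCObj C' ⥤ AddCommGrpCat.{u}) ⥤ AddCommGrpCat.{u})).rightDerived n ≅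
      (lim : (FCObj C ⥤ AddCommGrpCat.{u}) ⥤ AddCommGrpCat.{u}).rightDerived n :=
    { hom := NatTrans.rightDerived η.hom n
      inv := NatTrans.rightDerived η.inv n
      hom_inv_id := by
        rw [← NatTrans.rightDerived_comp, η.hom_inv_id, NatTrans.rightDerived_id]
      inv_hom_id := by
        rw [← NatTrans.rightDerived_comp, η.inv_hom_id, NatTrans.rightDerived_id] }
  exact ⟨(rd1.app D).symm ≪≫ rightDerivedCompIsoAux res lim D n⟩
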